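/- For every k ∈ ℤ₂, the normalized 2-adic logarithm satisfies (1/4)·log(1 + 4k) ≡ k modulo 2ℤ₂. -/

import Mathlib

open Filter

lemma aux_nat_norm_ge (m : ℕ) (hm : 0 < m) : ((m:ℝ))⁻¹ ≤ ‖((m : ℚ_[2]))‖ := by
  have h0 : ((m:ℚ_[2])) ≠ 0 := Nat.cast_ne_zero.mpr hm.ne'
  rw [Padic.norm_eq_zpow_neg_valuation h0, Padic.valuation_natCast, zpow_neg, zpow_natCast,
    inv_le_inv₀ (by positivity) (by positivity)]
  exact_mod_cast Nat.le_of_dvd hm (pow_padicValNat_dvd)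

/-- For every `k ∈ ℤ₂`, the normalized 2-adic logarithm satisfies
`(1/4)·log(1 + 4k) ≡ k mod 2ℤ₂`; that is, the series `∑_{n≥1} (-1)^{n+1} (4k)ⁿ/n`
converges (in `ℚ₂`) to `4·(k + 2c)` for some `c ∈ ℤ₂`. -/
theorem padic_log_one_add_four_mul (k : ℤ_[2]) :
    ∃ c : ℤ_[2], HasSum
      (fun n : ℕ => (-1 : ℚ_[2]) ^ n * (4 * (k : ℚ_[2])) ^ (n + 1) / (n + 1))
      (4 * ((k : ℚ_[2]) + 2 * (c : ℚ_[2]))) := by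
  set f : ℕ → ℚ_[2] := fun n => (-1 : ℚ_[2]) ^ n * (4 * (k : ℚ_[2])) ^ (n + 1) / (n + 1)
    with hfdef
  have h2 : ‖(2 : ℚ_[2])‖ = 2⁻¹ := by simpa using @Padic.norm_p 2 _
  have h4 : ‖(4 : ℚ_[2])‖ = 4⁻¹ := by
    have h : (4 : ℚ_[2]) = (2 : ℚ_[2]) ^ 2 := by norm_num
    rw [h, norm_pow, h2]; norm_num
  have hnorm : ∀ n : ℕ, ‖f n‖ ≤ ((n + 1 : ℕ) : ℝ) * (4 : ℝ)⁻¹ ^ (n + 1) := by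
    intro n
    have hn1 : ((n:ℚ_[2]) + 1) = ((n + 1 : ℕ) : ℚ_[2]) := by push_cast; ring
    have hn0 : ((n + 1 : ℕ) : ℚ_[2]) ≠ 0 := Nat.cast_ne_zero.mpr (Nat.succ_ne_zero n)
    have hfn : ‖f n‖ = ‖(4 * (k : ℚ_[2])) ^ (n + 1)‖ / ‖((n + 1 : ℕ) : ℚ_[2])‖ := by
      simp only [hfdef, hn1, norm_div, norm_mul, norm_pow, norm_neg, norm_one, one_pow, one_mul]
    rw [hfn, div_le_iff₀ (by simpa using hn0)]
    have h1 : ‖(4 * (k : ℚ_[2])) ^ (n + 1)‖ ≤ (4 : ℝ)⁻¹ ^ (n + 1) := by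
      rw [norm_pow]
      apply pow_le_pow_left₀ (norm_nonneg _)
      rw [norm_mul, h4]
      calc 4⁻¹ * ‖(k : ℚ_[2])‖ ≤ 4⁻¹ * 1 := by gcongr; exact PadicInt.norm_le_one k
        _ = 4⁻¹ := mul_one _
    have hne : ((n + 1 : ℕ) : ℝ) ≠ 0 := by positivity
    calc ‖(4 * (k : ℚ_[2])) ^ (n + 1)‖ ≤ (4 : ℝ)⁻¹ ^ (n + 1) := h1
      _ = ((n + 1 : ℕ) : ℝ) * (4:ℝ)⁻¹ ^ (n + 1) * ((n + 1 : ℕ) : ℝ)⁻¹ := by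
          field_simp
      _ ≤ ((n + 1 : ℕ) : ℝ) * (4:ℝ)⁻¹ ^ (n + 1) * ‖((n + 1 : ℕ) : ℚ_[2])‖ := by
          gcongr
          exact aux_nat_norm_ge (n+1) (Nat.succ_pos n)
  -- summability
  have hg : Summable (fun n : ℕ => ((n + 1 : ℕ) : ℝ) * (4 : ℝ)⁻¹ ^ (n + 1)) := by
    have h0 : Summable (fun n : ℕ => (n : ℝ) * (4 : ℝ)⁻¹ ^ n) := by
      simpa using summable_pow_mul_geometric_of_norm_lt_one 1
        (r := (4:ℝ)⁻¹) (by rw [norm_inv]; norm_num)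
    exact (summable_nat_add_iff (f := fun n : ℕ => (n : ℝ) * (4 : ℝ)⁻¹ ^ n) 1).mpr h0
  have hfs : Summable f := Summable.of_norm_bounded hg hnorm
  have htail : Summable (fun n => f (n + 1)) := (summable_nat_add_iff 1).mpr hfs
  set T : ℚ_[2] := ∑' n, f (n + 1) with hT
  have hTsum : HasSum (fun n => f (n + 1)) T := htail.hasSum
  -- norm bound on tail terms
  have hbound : ∀ n : ℕ, ‖f (n + 1)‖ ≤ 8⁻¹ := by
    intro n
    refine (hnorm (n + 1)).trans ?_
    rw [inv_pow, mul_inv_le_iff₀ (by positivity), inv_mul_eq_div, le_div_iff₀ (by norm_num)]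
    have key : 8 * (n + 2) ≤ 4 ^ (n + 2) := by
      induction n with
      | zero => norm_num
      | succ m ih =>
        calc 8 * (m + 1 + 2) ≤ 4 * (8 * (m + 2)) := by omega
          _ ≤ 4 * 4 ^ (m + 2) := by omega
          _ = 4 ^ (m + 1 + 2) := by ring
    calc ((n + 1 + 1 : ℕ) : ℝ) * 8 ≤ (4:ℝ) ^ (n + 2) := by
          have : ((8 * (n + 2) : ℕ) : ℝ) ≤ ((4 ^ (n + 2) : ℕ) : ℝ) := by exact_mod_cast key
          push_cast at this ⊢; linarith
      _ = 4 ^ (n + 1 + 1) := by ring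
  have hTnorm : ‖T‖ ≤ 8⁻¹ :=
    IsUltrametricDist.norm_tsum_le_of_forall_le_of_nonneg (by norm_num) hbound
  have h8 : ‖(8 : ℚ_[2])‖ = 8⁻¹ := by
    have h : (8 : ℚ_[2]) = (2 : ℚ_[2]) ^ 3 := by norm_num
    rw [h, norm_pow, h2]; norm_num
  refine ⟨⟨T / 8, ?_⟩, ?_⟩
  · rw [norm_div, h8, div_le_one (by norm_num)]
    calc ‖T‖ ≤ 8⁻¹ := hTnorm
      _ ≤ 8⁻¹ * 1 := by norm_num
      _ ≤ 8⁻¹ := by norm_num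
  · have hsum : HasSum f (T + ∑ i ∈ Finset.range 1, f i) := (hasSum_nat_add_iff 1).mp hTsum
    have hf0 : ∑ i ∈ Finset.range 1, f i = 4 * (k : ℚ_[2]) := by
      simp [hfdef]
    rw [hf0] at hsum
    convert hsum using 1
    show 4 * ((k : ℚ_[2]) + 2 * (T / 8)) = T + 4 * (k : ℚ_[2])
    field_simp
    ring
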